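/- Let u : ℝ^N → ℝ be a C³ function with bounded third derivatives, k₀ nonnegative, radially symmetric, supported in the unit ball with ∫ k₀ = 1, and set C = (½ ∫ k₀(z) z_N² dz)⁻¹ and ν_δ = C/δ². Then there is a constant M (depending on the C³ bound of u) such that for all x ∈ ℝ^N and all 0 < δ ≤ 1, |ν_δ ∫_{ℝ^N} k_δ(y - x)(u(y) - u(x)) dy − Δu(x)| ≤ M δ. -/

import Mathlib

open MeasureTheory

set_option maxHeartbeats 1000000

section Taylor
variable {E : Type*} [NormedAddCommGroup E] [NormedSpace ℝ E]

lemma taylor_order_two (u : E → ℝ) (hu : ContDiff ℝ 3 u) (C₃ : ℝ)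
    (hC₃ : ∀ z, ‖iteratedFDeriv ℝ 3 u z‖ ≤ C₃) (x v : E) :
    |u (x + v) - u x - fderiv ℝ u x v - (1/2) * fderiv ℝ (fderiv ℝ u) x v v|
      ≤ C₃ * ‖v‖ ^ 3 := by
  set g₁ := fderiv ℝ u with hg₁
  set g₂ := fderiv ℝ g₁ with hg₂
  have hu1 : ContDiff ℝ 2 g₁ := hu.fderiv_right (by norm_num)
  have hu2 : ContDiff ℝ 1 g₂ := hu1.fderiv_right (by norm_num)
  have hdu : Differentiable ℝ u := hu.differentiable (by norm_num)
  have hd1 : Differentiable ℝ g₁ := hu1.differentiable (by norm_num)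
  have hd2 : Differentiable ℝ g₂ := hu2.differentiable (by norm_num)
  letI : NormedAddCommGroup (E →L[ℝ] E →L[ℝ] ℝ) := inferInstance
  letI : NormedSpace ℝ (E →L[ℝ] E →L[ℝ] ℝ) := inferInstance
  have h3 : ∀ z, ‖fderiv ℝ g₂ z‖ ≤ C₃ := by
    intro z
    have e3 : ‖iteratedFDeriv ℝ 0 (fderiv ℝ g₂) z‖ = ‖iteratedFDeriv ℝ 1 g₂ z‖ :=
      norm_iteratedFDeriv_fderiv
    rw [norm_iteratedFDeriv_zero] at e3
    rw [e3, norm_iteratedFDeriv_fderiv, norm_iteratedFDeriv_fderiv]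
    exact hC₃ z
  have step1 : ∀ y, ‖g₂ y - g₂ x‖ ≤ C₃ * ‖y - x‖ := fun y =>
    Convex.norm_image_sub_le_of_norm_fderiv_le (fun z _ => hd2 z) (fun z _ => h3 z)
      convex_univ (Set.mem_univ x) (Set.mem_univ y)
  have step2 : ∀ y ∈ Metric.closedBall x ‖v‖,
      ‖g₁ y - g₁ x - (g₂ x) (y - x)‖ ≤ (C₃ * ‖v‖) * ‖y - x‖ := by
    intro y hy
    refine Convex.norm_image_sub_le_of_norm_fderiv_le' (φ := g₂ x)
      (fun z _ => hd1 z) (fun z hz => ?_) (convex_closedBall x ‖v‖)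
      (Metric.mem_closedBall_self (norm_nonneg v)) hy
    calc ‖fderiv ℝ g₁ z - g₂ x‖ = ‖g₂ z - g₂ x‖ := rfl
      _ ≤ C₃ * ‖z - x‖ := step1 z
      _ ≤ C₃ * ‖v‖ := by
          have hC₃0 : 0 ≤ C₃ := le_trans (norm_nonneg _) (hC₃ z)
          have : ‖z - x‖ ≤ ‖v‖ := by
            simpa [dist_eq_norm] using Metric.mem_closedBall.mp hz
          nlinarith
  have hsymm : ∀ w w', g₂ x w w' = g₂ x w' w :=
    second_derivative_symmetric (fun y => (hdu y).hasFDerivAt) (hd1 x).hasFDerivAt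
  set q : E → ℝ := fun y => u y - u x - g₁ x (y - x) - (1/2) * g₂ x (y - x) (y - x) with hqdef
  have hq : ∀ z, HasFDerivAt q (g₁ z - g₁ x - (g₂ x) (z - x)) z := by
    intro z
    have h0 : HasFDerivAt (fun y : E => y - x) (ContinuousLinearMap.id ℝ E) z :=
      (hasFDerivAt_id z).sub_const x
    have hA : HasFDerivAt (fun y : E => (g₁ x) (y - x)) ((g₁ x).comp (ContinuousLinearMap.id ℝ E)) z :=
      ((g₁ x).hasFDerivAt.comp z h0)
    rw [ContinuousLinearMap.comp_id] at hA
    have hc : HasFDerivAt (fun y : E => (g₂ x) (y - x)) ((g₂ x).comp (ContinuousLinearMap.id ℝ E)) z :=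
      ((g₂ x).hasFDerivAt.comp z h0)
    rw [ContinuousLinearMap.comp_id] at hc
    have hQ := hc.clm_apply h0
    have hcomb := (((hdu z).hasFDerivAt.sub_const (u x)).sub hA).sub (hQ.const_mul (1/2))
    convert hcomb using 1
    case e'_8 => rfl
    case e'_9 => rfl
    case e'_11 => rfl
    ext w
    simp only [ContinuousLinearMap.sub_apply, ContinuousLinearMap.smul_apply,
      ContinuousLinearMap.add_apply, ContinuousLinearMap.comp_apply,
      ContinuousLinearMap.flip_apply, ContinuousLinearMap.coe_id', id_eq, smul_eq_mul]
    rw [hsymm w (z - x)]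
    ring
  have bound3 : ∀ z ∈ Metric.closedBall x ‖v‖,
      ‖g₁ z - g₁ x - (g₂ x) (z - x)‖ ≤ C₃ * ‖v‖ * ‖v‖ := by
    intro z hz
    have h1 := step2 z hz
    have h2 : ‖z - x‖ ≤ ‖v‖ := by simpa [dist_eq_norm] using Metric.mem_closedBall.mp hz
    have hC₃0 : 0 ≤ C₃ := le_trans (norm_nonneg _) (hC₃ z)
    have := mul_le_mul_of_nonneg_left h2 (mul_nonneg hC₃0 (norm_nonneg v))
    linarith
  have main : ‖q (x + v) - q x‖ ≤ (C₃ * ‖v‖ * ‖v‖) * ‖(x + v) - x‖ :=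
    Convex.norm_image_sub_le_of_norm_hasFDerivWithin_le
      (fun z hz => (hq z).hasFDerivWithinAt) bound3 (convex_closedBall x ‖v‖)
      (Metric.mem_closedBall_self (norm_nonneg v))
      (by simp [Metric.mem_closedBall, dist_eq_norm])
  have hqx : q x = 0 := by simp [hqdef]
  have hqxv : q (x + v) = u (x + v) - u x - g₁ x v - (1/2) * g₂ x v v := by
    simp only [hqdef]
    rw [add_sub_cancel_left]
  rw [hqx, sub_zero, hqxv, add_sub_cancel_left, Real.norm_eq_abs] at main
  calc |u (x + v) - u x - fderiv ℝ u x v - 1/2 * (fderiv ℝ (fderiv ℝ u) x) v v|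
      ≤ C₃ * ‖v‖ * ‖v‖ * ‖v‖ := main
    _ = C₃ * ‖v‖ ^ 3 := by ring
end Taylor

section Aux

variable {N : ℕ} (k₀ : EuclideanSpace ℝ (Fin N) → ℝ)

lemma coord_abs_le_norm (z : EuclideanSpace ℝ (Fin N)) (i : Fin N) : |z i| ≤ ‖z‖ := by
  calc |z i| = Real.sqrt ((z i)^2) := (Real.sqrt_sq_eq_abs _).symm
    _ ≤ Real.sqrt (∑ l, ‖z l‖^2) := by
        apply Real.sqrt_le_sqrt
        have h : (z i)^2 = ‖z i‖^2 := by rw [Real.norm_eq_abs, sq_abs]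
        rw [h]
        exact Finset.single_le_sum (f := fun l => ‖z l‖^2)
          (fun l _ => sq_nonneg _) (Finset.mem_univ i)
    _ = ‖z‖ := by rw [EuclideanSpace.norm_eq]

lemma key_lemma (hk_int : Integrable k₀)
    (hk_nonneg : ∀ z, 0 ≤ k₀ z)
    (hk_supp : ∀ z : EuclideanSpace ℝ (Fin N), ‖z‖ > 1 → k₀ z = 0)
    (hk_total : ∫ z, k₀ z = 1)
    (g : EuclideanSpace ℝ (Fin N) → ℝ) (B : ℝ) (hgm : AEStronglyMeasurable g volume)
    (hgb : ∀ z, ‖z‖ ≤ 1 → |g z| ≤ B) :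
    Integrable (fun z => k₀ z * g z) ∧ |∫ z, k₀ z * g z| ≤ B := by
  have hB : 0 ≤ B := le_trans (abs_nonneg _) (hgb 0 (by simp))
  have hbd : ∀ z, ‖k₀ z * g z‖ ≤ B * k₀ z := by
    intro z
    rcases le_or_gt ‖z‖ 1 with h | h
    · rw [Real.norm_eq_abs, abs_mul, abs_of_nonneg (hk_nonneg z), mul_comm B (k₀ z)]
      exact mul_le_mul_of_nonneg_left (hgb z h) (hk_nonneg z)
    · rw [hk_supp z h]
      simpa using mul_nonneg hB (hk_nonneg z)
  have hint : Integrable (fun z => k₀ z * g z) :=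
    Integrable.mono' (hk_int.const_mul B) (hk_int.aestronglyMeasurable.mul hgm)
      (Filter.Eventually.of_forall hbd)
  refine ⟨hint, ?_⟩
  have h := norm_integral_le_of_norm_le (hk_int.const_mul B) (Filter.Eventually.of_forall hbd)
  rwa [Real.norm_eq_abs, integral_const_mul, hk_total, mul_one] at h

lemma mom_one (hk_sym : ∀ z z' : EuclideanSpace ℝ (Fin N), ‖z‖ = ‖z'‖ → k₀ z = k₀ z')
    (L : EuclideanSpace ℝ (Fin N) →L[ℝ] ℝ) : (∫ z, k₀ z * L z) = 0 := by
  have hke : ∀ z, k₀ (-z) = k₀ z := fun z => hk_sym _ _ (norm_neg z)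
  have h := integral_neg_eq_self (fun z : EuclideanSpace ℝ (Fin N) => k₀ z * L z) volume
  simp only [hke, map_neg, mul_neg, integral_neg] at h
  linarith

lemma mom_offdiag (hk_sym : ∀ z z' : EuclideanSpace ℝ (Fin N), ‖z‖ = ‖z'‖ → k₀ z = k₀ z')
    (i j : Fin N) (hij : j ≠ i) :
    (∫ z : EuclideanSpace ℝ (Fin N), k₀ z * (z i * z j)) = 0 := by
  classical
  set e : EuclideanSpace ℝ (Fin N) ≃ₗᵢ[ℝ] EuclideanSpace ℝ (Fin N) :=
    LinearIsometryEquiv.piLpCongrRight 2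
      (fun l : Fin N => if l = i then LinearIsometryEquiv.neg ℝ (E := ℝ)
        else LinearIsometryEquiv.refl ℝ ℝ) with he
  have happ : ∀ (z : EuclideanSpace ℝ (Fin N)) (l : Fin N),
      e z l = if l = i then -(z l) else z l := by
    intro z l
    rw [he, LinearIsometryEquiv.piLpCongrRight_apply]
    by_cases h : l = i
    · subst h; simp
    · simp [h]
  have h := MeasureTheory.integral_comp e (fun z : EuclideanSpace ℝ (Fin N) => k₀ z * (z i * z j))
  have hrw : ∀ z : EuclideanSpace ℝ (Fin N),
      k₀ (e z) * (e z i * e z j) = -(k₀ z * (z i * z j)) := by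
    intro z
    rw [hk_sym _ _ (e.norm_map z), happ z i, happ z j, if_pos rfl, if_neg hij]
    ring
  simp only [hrw, integral_neg] at h
  linarith

lemma mom_diag (hk_sym : ∀ z z' : EuclideanSpace ℝ (Fin N), ‖z‖ = ‖z'‖ → k₀ z = k₀ z')
    (i i' : Fin N) :
    (∫ z : EuclideanSpace ℝ (Fin N), k₀ z * (z i)^2)
      = ∫ z : EuclideanSpace ℝ (Fin N), k₀ z * (z i')^2 := by
  classical
  set e : EuclideanSpace ℝ (Fin N) ≃ₗᵢ[ℝ] EuclideanSpace ℝ (Fin N) :=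
    LinearIsometryEquiv.piLpCongrLeft 2 ℝ ℝ (Equiv.swap i i') with he
  have happ : ∀ (z : EuclideanSpace ℝ (Fin N)) (l : Fin N),
      e z l = z (Equiv.swap i i' l) := by
    intro z l
    rw [he, LinearIsometryEquiv.piLpCongrLeft_apply]
    simp [Equiv.piCongrLeft', Equiv.symm_swap]
  have h := MeasureTheory.integral_comp e (fun z : EuclideanSpace ℝ (Fin N) => k₀ z * (z i)^2)
  have hrw : ∀ z : EuclideanSpace ℝ (Fin N),
      k₀ (e z) * (e z i)^2 = k₀ z * (z i')^2 := by
    intro z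
    rw [hk_sym _ _ (e.norm_map z), happ z i, Equiv.swap_apply_left]
  simp only [hrw] at h
  exact h.symm

lemma second_moment_pos (hN : 0 < N) (hk_int : Integrable k₀)
    (hk_nonneg : ∀ z, 0 ≤ k₀ z)
    (hk_supp : ∀ z : EuclideanSpace ℝ (Fin N), ‖z‖ > 1 → k₀ z = 0)
    (hk_total : ∫ z, k₀ z = 1) (i : Fin N) :
    0 < ∫ z : EuclideanSpace ℝ (Fin N), k₀ z * (z i) ^ 2 := by
  have hcoord : Continuous fun z : EuclideanSpace ℝ (Fin N) => z i :=
    (EuclideanSpace.proj (𝕜 := ℝ) i).continuous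
  have hS_nonneg0 : ∀ z : EuclideanSpace ℝ (Fin N), 0 ≤ k₀ z * (z i) ^ 2 :=
    fun z => mul_nonneg (hk_nonneg z) (sq_nonneg _)
  have hS_int : Integrable (fun z : EuclideanSpace ℝ (Fin N) => k₀ z * (z i) ^ 2) := by
    refine (key_lemma k₀ hk_int hk_nonneg hk_supp hk_total _ 1
      ((hcoord.pow 2).aestronglyMeasurable) ?_).1
    intro z hz
    simp only [Pi.pow_apply]
    rw [abs_pow, sq_abs, ← sq_abs]
    have h1 := coord_abs_le_norm z i
    nlinarith [abs_nonneg (z i), norm_nonneg z]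
  rcases lt_or_eq_of_le (integral_nonneg (f := fun z => k₀ z * (z i) ^ 2) hS_nonneg0) with h | h
  · exact h
  · exfalso
    have h0 : (fun z : EuclideanSpace ℝ (Fin N) => k₀ z * (z i) ^ 2)
        =ᵐ[volume] 0 := (integral_eq_zero_iff_of_nonneg hS_nonneg0 hS_int).mp h.symm
    have hker_ne : LinearMap.ker (EuclideanSpace.projₗ (𝕜 := ℝ) i) ≠ ⊤ := by
      intro htop
      have hmem : EuclideanSpace.single i (1:ℝ) ∈
          LinearMap.ker (EuclideanSpace.projₗ (𝕜 := ℝ) i) := by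
        rw [htop]; trivial
      rw [LinearMap.mem_ker] at hmem
      simp [EuclideanSpace.single_apply] at hmem
    have hplane : volume {z : EuclideanSpace ℝ (Fin N) | z i = 0} = 0 := by
      have hset : {z : EuclideanSpace ℝ (Fin N) | z i = 0}
          = (LinearMap.ker (EuclideanSpace.projₗ (𝕜 := ℝ) i) : Set _) := by
        ext z
        simp [LinearMap.mem_ker]
      rw [hset]
      exact Measure.addHaar_submodule volume _ hker_ne
    have hcompl : ∀ᵐ z : EuclideanSpace ℝ (Fin N), z i ≠ 0 := by
      rw [ae_iff]
      simpa using hplane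
    have hk0 : k₀ =ᵐ[volume] 0 := by
      filter_upwards [h0, hcompl] with z h1 h2
      have hz2 : (z i)^2 ≠ 0 := pow_ne_zero _ h2
      have h3 := mul_eq_zero.mp h1
      tauto
    have hcontra : (1:ℝ) = 0 := by rw [← hk_total, integral_congr_ae hk0]; simp
    norm_num at hcontra

lemma change_of_var (u : EuclideanSpace ℝ (Fin N) → ℝ)
    (x : EuclideanSpace ℝ (Fin N)) (δ : ℝ) (hδ : 0 < δ) :
    (∫ y : EuclideanSpace ℝ (Fin N), (δ ^ N)⁻¹ * k₀ (δ⁻¹ • (y - x)) * (u y - u x))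
      = ∫ z : EuclideanSpace ℝ (Fin N), k₀ z * (u (x + δ • z) - u x) := by
  have hδ0 : δ ≠ 0 := ne_of_gt hδ
  set F : EuclideanSpace ℝ (Fin N) → ℝ :=
    fun w => (δ ^ N)⁻¹ * k₀ (δ⁻¹ • w) * (u (x + w) - u x) with hF
  have h1 : (fun y : EuclideanSpace ℝ (Fin N) =>
      (δ ^ N)⁻¹ * k₀ (δ⁻¹ • (y - x)) * (u y - u x)) = fun y => F (y - x) := by
    funext y
    rw [hF]
    simp
  rw [h1, integral_sub_right_eq_self F x]
  have h2 := MeasureTheory.Measure.integral_comp_smul volume F δ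
  rw [finrank_euclideanSpace_fin] at h2
  have habs2 : |((δ : ℝ) ^ N)⁻¹| = (δ ^ N)⁻¹ := abs_of_pos (by positivity)
  rw [habs2] at h2
  have h3 : ∀ z, F (δ • z) = (δ ^ N)⁻¹ * (k₀ z * (u (x + δ • z) - u x)) := by
    intro z
    rw [hF]
    simp only [smul_smul, inv_mul_cancel₀ hδ0, one_smul]
    ring
  have h4 : (∫ z, F (δ • z)) = (δ ^ N)⁻¹ * ∫ z, k₀ z * (u (x + δ • z) - u x) := by
    simp only [h3]
    rw [integral_const_mul]
  rw [h4, smul_eq_mul] at h2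
  have hpow : (δ:ℝ) ^ N ≠ 0 := pow_ne_zero _ hδ0
  field_simp at h2
  linarith [h2]

lemma basis_expansion (z : EuclideanSpace ℝ (Fin N)) :
    ∑ i, z i • (EuclideanSpace.single i (1:ℝ)) = z := by
  classical
  have h := (EuclideanSpace.basisFun (Fin N) ℝ).sum_repr z
  simpa [EuclideanSpace.basisFun_apply, EuclideanSpace.basisFun_repr] using h

lemma bilin_expansion (B : EuclideanSpace ℝ (Fin N) →L[ℝ] EuclideanSpace ℝ (Fin N) →L[ℝ] ℝ)
    (z : EuclideanSpace ℝ (Fin N)) :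
    B z z = ∑ i, ∑ j, (z i * z j) *
      B (EuclideanSpace.single i 1) (EuclideanSpace.single j 1) := by
  conv_lhs => rw [← basis_expansion z]
  rw [map_sum]
  have step : ∀ j : Fin N, (B (∑ i, z i • EuclideanSpace.single i (1:ℝ)))
      (z j • EuclideanSpace.single j (1:ℝ))
      = ∑ i, (z i * z j) * B (EuclideanSpace.single i 1) (EuclideanSpace.single j 1) := by
    intro j
    rw [_root_.map_smul, smul_eq_mul, map_sum, ContinuousLinearMap.sum_apply, Finset.mul_sum]
    refine Finset.sum_congr rfl fun i _ => ?_
    rw [_root_.map_smul, ContinuousLinearMap.smul_apply, smul_eq_mul]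
    ring
  simp only [step]
  exact Finset.sum_comm

end Aux

/-- Consistency estimate: the rescaled nonlocal operator approximates the Laplacian at rate δ. -/
theorem nonlocal_approximates_laplacian (N : ℕ) (hN : 0 < N)
    (u : EuclideanSpace ℝ (Fin N) → ℝ)
    (hu : ContDiff ℝ 3 u)
    (hu3 : ∃ C₃ : ℝ, ∀ x, ‖iteratedFDeriv ℝ 3 u x‖ ≤ C₃)
    (k₀ : EuclideanSpace ℝ (Fin N) → ℝ)
    (hk_int : Integrable k₀)
    (hk_nonneg : ∀ z, 0 ≤ k₀ z)
    (hk_sym : ∀ z z' : EuclideanSpace ℝ (Fin N), ‖z‖ = ‖z'‖ → k₀ z = k₀ z')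
    (hk_supp : ∀ z : EuclideanSpace ℝ (Fin N), ‖z‖ > 1 → k₀ z = 0)
    (hk_total : ∫ z, k₀ z = 1)
    (C : ℝ)
    (hC : C = ((1 / 2) * ∫ z : EuclideanSpace ℝ (Fin N),
      k₀ z * (z ⟨N - 1, by omega⟩) ^ 2)⁻¹) :
    ∃ M : ℝ, ∀ x : EuclideanSpace ℝ (Fin N), ∀ δ : ℝ, 0 < δ → δ ≤ 1 →
      |(C / δ ^ 2) *
          (∫ y : EuclideanSpace ℝ (Fin N),
            (δ ^ N)⁻¹ * k₀ (δ⁻¹ • (y - x)) * (u y - u x))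
        - ∑ i : Fin N,
            fderiv ℝ (fun y => fderiv ℝ u y (EuclideanSpace.single i 1)) x
              (EuclideanSpace.single i 1)|
      ≤ M * δ := by
  classical
  obtain ⟨C₃, hC₃⟩ := hu3
  have hC₃0 : 0 ≤ C₃ := le_trans (norm_nonneg _) (hC₃ 0)
  have hd1 : Differentiable ℝ (fderiv ℝ u) :=
    (hu.fderiv_right (m := 2) (by norm_num)).differentiable (by norm_num)
  set S : ℝ := ∫ z : EuclideanSpace ℝ (Fin N), k₀ z * (z ⟨N - 1, by omega⟩) ^ 2 with hSdef
  have hCS : C = ((1/2) * S)⁻¹ := hC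
  have hSpos : 0 < S := second_moment_pos k₀ hN hk_int hk_nonneg hk_supp hk_total _
  have hCpos : 0 < C := by rw [hCS]; exact inv_pos.mpr (by linarith)
  have hCS1 : C * S = 2 := by rw [hCS]; field_simp
  have hcoord : ∀ i : Fin N, Continuous fun z : EuclideanSpace ℝ (Fin N) => z i :=
    fun i => (EuclideanSpace.proj (𝕜 := ℝ) i).continuous
  have lap_eq : ∀ (i : Fin N) (x : EuclideanSpace ℝ (Fin N)),
      fderiv ℝ (fun y => fderiv ℝ u y (EuclideanSpace.single i 1)) x (EuclideanSpace.single i 1)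
        = fderiv ℝ (fderiv ℝ u) x (EuclideanSpace.single i 1) (EuclideanSpace.single i 1) := by
    intro i x
    have hd : HasFDerivAt (fun y => fderiv ℝ u y (EuclideanSpace.single i 1))
        (((fderiv ℝ u x).comp 0) + (fderiv ℝ (fderiv ℝ u) x).flip (EuclideanSpace.single i 1)) x :=
      (hd1 x).hasFDerivAt.clm_apply (hasFDerivAt_const _ _)
    rw [hd.fderiv]
    simp
  have intij : ∀ i j : Fin N,
      Integrable (fun z : EuclideanSpace ℝ (Fin N) => k₀ z * (z i * z j)) := by
    intro i j
    refine (key_lemma k₀ hk_int hk_nonneg hk_supp hk_total _ 1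
      (((hcoord i).mul (hcoord j)).aestronglyMeasurable) ?_).1
    intro z hz
    simp only [Pi.mul_apply]
    rw [abs_mul]
    have h1 := coord_abs_le_norm z i
    have h2 := coord_abs_le_norm z j
    have h3 : |z i| ≤ 1 := le_trans h1 hz
    have h4 : |z j| ≤ 1 := le_trans h2 hz
    calc |z i| * |z j| ≤ 1 * 1 :=
      mul_le_mul h3 h4 (abs_nonneg _) zero_le_one
    _ = 1 := one_mul 1
  refine ⟨C * C₃, ?_⟩
  intro x δ hδ hδ1
  have hδ0 : δ ≠ 0 := ne_of_gt hδ
  set L : EuclideanSpace ℝ (Fin N) →L[ℝ] ℝ := fderiv ℝ u x with hLdef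
  set B₂ : EuclideanSpace ℝ (Fin N) →L[ℝ] EuclideanSpace ℝ (Fin N) →L[ℝ] ℝ :=
    fderiv ℝ (fderiv ℝ u) x with hB₂def
  set Lap : ℝ := ∑ i, B₂ (EuclideanSpace.single i 1) (EuclideanSpace.single i 1) with hLapdef
  -- Taylor remainder
  set R : EuclideanSpace ℝ (Fin N) → ℝ :=
    fun z => u (x + δ • z) - u x - L (δ • z) - (1/2) * B₂ (δ • z) (δ • z) with hRdef
  have hRb : ∀ z, ‖z‖ ≤ 1 → |R z| ≤ C₃ * δ^3 := by
    intro z hz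
    have h := taylor_order_two u hu C₃ hC₃ x (δ • z)
    have hnorm : ‖δ • z‖ = δ * ‖z‖ := by
      rw [norm_smul, Real.norm_eq_abs, abs_of_pos hδ]
    have h2 : ‖δ • z‖^3 ≤ δ^3 := by
      rw [hnorm]
      have h5 : δ * ‖z‖ ≤ δ := mul_le_of_le_one_right (le_of_lt hδ) hz
      have h0 : 0 ≤ δ * ‖z‖ := mul_nonneg (le_of_lt hδ) (norm_nonneg z)
      exact pow_le_pow_left₀ h0 h5 3
    calc |R z| ≤ C₃ * ‖δ • z‖^3 := h
      _ ≤ C₃ * δ^3 := mul_le_mul_of_nonneg_left h2 hC₃0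
  have hucont : Continuous u := hu.continuous
  have hRcont : Continuous R := by
    rw [hRdef]
    fun_prop
  -- pointwise splitting
  have hsplit : ∀ z : EuclideanSpace ℝ (Fin N), k₀ z * (u (x + δ • z) - u x)
      = δ * (k₀ z * L z) + ((δ^2/2) * (k₀ z * B₂ z z) + k₀ z * R z) := by
    intro z
    have h1 : L (δ • z) = δ * L z := by rw [_root_.map_smul, smul_eq_mul]
    have h2 : (B₂ (δ • z)) (δ • z) = δ^2 * (B₂ z z) := by
      simp only [_root_.map_smul, ContinuousLinearMap.smul_apply, smul_eq_mul]
      ring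
    simp only [hRdef]
    rw [h1, h2]
    ring
  -- integrability of the pieces
  have intL : Integrable (fun z => k₀ z * L z) := by
    refine (key_lemma k₀ hk_int hk_nonneg hk_supp hk_total _ ‖L‖
      (L.continuous.aestronglyMeasurable) ?_).1
    intro z hz
    calc |L z| ≤ ‖L‖ * ‖z‖ := L.le_opNorm z
      _ ≤ ‖L‖ := mul_le_of_le_one_right (norm_nonneg L) hz
  have intB : Integrable (fun z => k₀ z * B₂ z z) := by
    refine (key_lemma k₀ hk_int hk_nonneg hk_supp hk_total _ ‖B₂‖ ?_ ?_).1
    · have hc : Continuous fun z : EuclideanSpace ℝ (Fin N) => B₂ z z := by fun_prop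
      exact hc.aestronglyMeasurable
    · intro z hz
      calc |B₂ z z| ≤ ‖B₂ z‖ * ‖z‖ := (B₂ z).le_opNorm z
        _ ≤ (‖B₂‖ * ‖z‖) * ‖z‖ :=
            mul_le_mul_of_nonneg_right (B₂.le_opNorm z) (norm_nonneg z)
        _ = ‖B₂‖ * (‖z‖ * ‖z‖) := by ring
        _ ≤ ‖B₂‖ * 1 := by
            refine mul_le_mul_of_nonneg_left ?_ (norm_nonneg B₂)
            calc ‖z‖ * ‖z‖ ≤ 1 * 1 := mul_le_mul hz hz (norm_nonneg z) zero_le_one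
              _ = 1 := one_mul 1
        _ = ‖B₂‖ := mul_one _
  have keyR := key_lemma k₀ hk_int hk_nonneg hk_supp hk_total R (C₃ * δ^3)
    hRcont.aestronglyMeasurable hRb
  have intR : Integrable (fun z => k₀ z * R z) := keyR.1
  have hRint : |∫ z, k₀ z * R z| ≤ C₃ * δ^3 := keyR.2
  -- the integral splits
  have hIsplit : (∫ z : EuclideanSpace ℝ (Fin N), k₀ z * (u (x + δ • z) - u x))
      = δ * (∫ z, k₀ z * L z) + ((δ^2/2) * (∫ z, k₀ z * B₂ z z) + ∫ z, k₀ z * R z) := by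
    rw [show (fun z : EuclideanSpace ℝ (Fin N) => k₀ z * (u (x + δ • z) - u x))
        = fun z => δ * (k₀ z * L z) + ((δ^2/2) * (k₀ z * B₂ z z) + k₀ z * R z)
      from funext hsplit]
    have i1 : Integrable (fun z => δ * (k₀ z * L z)) volume := intL.const_mul δ
    have i2 : Integrable (fun z => (δ^2/2) * (k₀ z * B₂ z z)) volume := intB.const_mul _
    have i3 : Integrable (fun z : EuclideanSpace ℝ (Fin N) =>
        (δ^2/2) * (k₀ z * B₂ z z) + k₀ z * R z) volume := i2.add intR
    rw [integral_add i1 i3, integral_add i2 intR, integral_const_mul, integral_const_mul]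
  have hI1 : (∫ z, k₀ z * L z) = 0 := mom_one k₀ hk_sym L
  have hI2 : (∫ z, k₀ z * B₂ z z) = S * Lap := by
    have hfeq : (fun z : EuclideanSpace ℝ (Fin N) => k₀ z * B₂ z z)
        = fun z => ∑ i, ∑ j, (k₀ z * (z i * z j)) *
            B₂ (EuclideanSpace.single i 1) (EuclideanSpace.single j 1) := by
      funext z
      rw [bilin_expansion B₂ z, Finset.mul_sum]
      refine Finset.sum_congr rfl fun i _ => ?_
      rw [Finset.mul_sum]
      exact Finset.sum_congr rfl fun j _ => by ring
    rw [hfeq, integral_finset_sum _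
        (fun i _ => integrable_finset_sum _ (fun j _ => (intij i j).mul_const _)),
      hLapdef, Finset.mul_sum]
    refine Finset.sum_congr rfl fun i _ => ?_
    rw [integral_finset_sum _ (fun j _ => (intij i j).mul_const _),
      Finset.sum_eq_single i]
    · rw [integral_mul_const]
      have hdg : (∫ z : EuclideanSpace ℝ (Fin N), k₀ z * (z i * z i)) = S := by
        have hsq : ∀ z : EuclideanSpace ℝ (Fin N), k₀ z * (z i * z i) = k₀ z * (z i)^2 := by
          intro z; ring
        simp only [hsq]
        rw [hSdef]
        exact mom_diag k₀ hk_sym i ⟨N - 1, by omega⟩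
      rw [hdg, mul_comm]
    · intro j _ hj
      rw [integral_mul_const, mom_offdiag k₀ hk_sym i j hj, zero_mul]
    · intro h
      exact absurd (Finset.mem_univ i) h
  rw [change_of_var k₀ u x δ hδ]
  have hgoal_sum : (∑ i : Fin N,
      fderiv ℝ (fun y => fderiv ℝ u y (EuclideanSpace.single i 1)) x
        (EuclideanSpace.single i 1)) = Lap := by
    rw [hLapdef]
    exact Finset.sum_congr rfl fun i _ => lap_eq i x
  rw [hgoal_sum, hIsplit, hI1, hI2]
  have key_eq : C / δ^2 * (δ * 0 + ((δ^2/2) * (S * Lap) + ∫ z, k₀ z * R z)) - Lap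
      = (C/δ^2) * ∫ z, k₀ z * R z := by
    have hd2 : (δ:ℝ)^2 ≠ 0 := pow_ne_zero _ hδ0
    calc C / δ^2 * (δ * 0 + ((δ^2/2) * (S * Lap) + ∫ z, k₀ z * R z)) - Lap
        = (C * S / 2) * Lap + (C/δ^2) * (∫ z, k₀ z * R z) - Lap := by
          field_simp
          ring
      _ = (C/δ^2) * ∫ z, k₀ z * R z := by rw [hCS1]; ring
  rw [key_eq, abs_mul, abs_of_pos (show 0 < C/δ^2 by positivity)]
  calc (C/δ^2) * |∫ z, k₀ z * R z| ≤ (C/δ^2) * (C₃ * δ^3) :=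
        mul_le_mul_of_nonneg_left hRint (le_of_lt (by positivity))
    _ = C * C₃ * δ := by field_simp
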